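/- Let N = {u_1, …, u_n} be a finite ground set, let g be a non-negative submodular function on N, let ℓ be a non-negative linear function on N, and set f = g + ℓ. Define sets X_0 = ∅, Y_0 = N and, for i = 1, …, n: if f(X_{i−1} ∪ {u_i}) − f(X_{i−1}) ≥ f(Y_{i−1} \ {u_i}) − f(Y_{i−1}), set X_i = X_{i−1} ∪ {u_i} and Y_i = Y_{i−1}; otherwise set X_i = X_{i−1} and Y_i = Y_{i−1} \ {u_i}. Then for every α ∈ [0, 1/3] and every set S ⊆ N, f(X_n) ≥ α·g(S) + (1 − α)·ℓ(S). -/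

import Mathlib

lemma dg_submod_key {α : Type*} [DecidableEq α] (g : Finset α → ℝ)
    (hg : ∀ S T : Finset α, g (S ∪ T) + g (S ∩ T) ≤ g S + g T)
    {X Y : Finset α} {x : α} (hXY : X ⊆ Y) (hxX : x ∉ X) (hxY : x ∈ Y) :
    g Y + g X ≤ g (X ∪ {x}) + g (Y \ {x}) := by
  have h := hg (X ∪ {x}) (Y \ {x})
  have h1 : (X ∪ {x}) ∪ (Y \ {x}) = Y := by
    ext v
    have hv1 : v ∈ X → v ∈ Y := fun hv => hXY hv
    by_cases hv : v = x <;>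
      simp only [Finset.mem_union, Finset.mem_singleton, Finset.mem_sdiff, hv] <;> tauto
  have h2 : (X ∪ {x}) ∩ (Y \ {x}) = X := by
    ext v
    have hv1 : v ∈ X → v ∈ Y := fun hv => hXY hv
    by_cases hv : v = x <;>
      simp only [Finset.mem_inter, Finset.mem_union, Finset.mem_singleton, Finset.mem_sdiff, hv] <;>
      tauto
  rw [h1, h2] at h
  linarith

set_option maxHeartbeats 1600000 in
theorem deterministic_double_greedy
    {α : Type*} [Fintype α] [DecidableEq α] {n : ℕ}
    (u : Fin n → α) (hu : Function.Bijective u)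
    (g : Finset α → ℝ)
    (hg_sub : ∀ S T : Finset α, g (S ∪ T) + g (S ∩ T) ≤ g S + g T)
    (hg_nonneg : ∀ S : Finset α, 0 ≤ g S)
    (a : α → ℝ) (ha : ∀ v : α, 0 ≤ a v)
    (ℓ : Finset α → ℝ) (hℓ : ∀ S : Finset α, ℓ S = ∑ v ∈ S, a v)
    (f : Finset α → ℝ) (hf : ∀ S : Finset α, f S = g S + ℓ S)
    (X Y : ℕ → Finset α)
    (hX0 : X 0 = ∅) (hY0 : Y 0 = Finset.univ)
    (hstep : ∀ i : Fin n,
      (f (X i.val ∪ {u i}) - f (X i.val) ≥ f (Y i.val \ {u i}) - f (Y i.val) →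
        X (i.val + 1) = X i.val ∪ {u i} ∧ Y (i.val + 1) = Y i.val) ∧
      (¬ (f (X i.val ∪ {u i}) - f (X i.val) ≥ f (Y i.val \ {u i}) - f (Y i.val)) →
        X (i.val + 1) = X i.val ∧ Y (i.val + 1) = Y i.val \ {u i}))
    (r : ℝ) (hr0 : 0 ≤ r) (hr1 : r ≤ 1 / 3) (S : Finset α) :
    f (X n) ≥ r * g S + (1 - r) * ℓ S := by
  -- linear function facts
  have hl_insert : ∀ (T : Finset α) (x : α), x ∉ T → ℓ (T ∪ {x}) = ℓ T + a x := by
    intro T x hx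
    have he : T ∪ {x} = insert x T := by ext v; simp [or_comm]
    rw [hℓ, hℓ, he, Finset.sum_insert hx]
    ring
  have hl_erase : ∀ (T : Finset α) (x : α), x ∈ T → ℓ (T \ {x}) = ℓ T - a x := by
    intro T x hx
    rw [hℓ, hℓ, Finset.sdiff_singleton_eq_erase, Finset.sum_erase_eq_sub hx]
  -- main induction
  have key : ∀ i : ℕ, i ≤ n →
      (X i ⊆ Y i ∧
       (∀ v : α, (v ∈ Y i ∧ v ∉ X i) ↔ ∃ j : Fin n, i ≤ (j : ℕ) ∧ u j = v) ∧
       f (Y 0) ≤ f (Y i) ∧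
       f ((S ∪ X 0) ∩ Y 0) - f ((S ∪ X i) ∩ Y i) ≤
         (f (X i) - f (X 0)) + (f (Y i) - f (Y 0))) := by
    intro i
    induction i with
    | zero =>
      intro _
      refine ⟨by simp [hX0], fun v => ?_, le_refl _, by simp⟩
      constructor
      · intro _
        obtain ⟨j, hj⟩ := hu.2 v
        exact ⟨j, Nat.zero_le _, hj⟩
      · intro _
        exact ⟨by simp [hY0], by simp [hX0]⟩
    | succ i ih =>
      intro hin
      have hi : i < n := hin
      obtain ⟨hXYi, hiff, hYmono, htel⟩ := ih (le_of_lt hi)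
      set x := u ⟨i, hi⟩ with hxdef
      have hxYX : x ∈ Y i ∧ x ∉ X i := (hiff x).2 ⟨⟨i, hi⟩, le_refl _, rfl⟩
      obtain ⟨hxY, hxX⟩ := hxYX
      -- sum of marginals is nonnegative
      have hsum : 0 ≤ (f (X i ∪ {x}) - f (X i)) + (f (Y i \ {x}) - f (Y i)) := by
        have hg := dg_submod_key g hg_sub hXYi hxX hxY
        have e1 : f (X i ∪ {x}) = g (X i ∪ {x}) + ℓ (X i) + a x := by
          rw [hf, hl_insert _ _ hxX]; ring
        have e2 : f (Y i \ {x}) = g (Y i \ {x}) + ℓ (Y i) - a x := by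
          rw [hf, hl_erase _ _ hxY]; ring
        rw [e1, e2, hf (X i), hf (Y i)]
        linarith
      by_cases hc : f (X i ∪ {x}) - f (X i) ≥ f (Y i \ {x}) - f (Y i)
      · obtain ⟨hX1, hY1⟩ := (hstep ⟨i, hi⟩).1 hc
        have haddpos : 0 ≤ f (X i ∪ {x}) - f (X i) := by linarith
        refine ⟨?_, ?_, ?_, ?_⟩
        · rw [hX1, hY1]
          intro v hv
          rcases Finset.mem_union.1 hv with h | h
          · exact hXYi h
          · rw [Finset.mem_singleton.1 h]; exact hxY
        · intro v
          rw [hX1, hY1]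
          constructor
          · rintro ⟨hvY, hvX⟩
            have hvX' : v ∉ X i := fun hh => hvX (Finset.mem_union_left _ hh)
            have hvx : v ≠ x := fun hh => hvX (by simp [hh, hxdef])
            obtain ⟨j, hj, hjv⟩ := (hiff v).1 ⟨hvY, hvX'⟩
            refine ⟨j, ?_, hjv⟩
            rcases Nat.lt_or_ge (j : ℕ) (i + 1) with h | h
            · exfalso
              have : (j : ℕ) = i := by omega
              have : j = ⟨i, hi⟩ := Fin.ext this
              exact hvx (by rw [← hjv, this])
            · exact h
          · rintro ⟨j, hj, hjv⟩
            have hprev := (hiff v).2 ⟨j, by omega, hjv⟩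
            refine ⟨hprev.1, fun hh => ?_⟩
            rcases Finset.mem_union.1 hh with h | h
            · exact hprev.2 h
            · have hvx : v = x := Finset.mem_singleton.1 h
              have : j = ⟨i, hi⟩ := hu.1 (by rw [hjv, hvx])
              have : (j : ℕ) = i := by rw [this]
              omega
        · rw [hY1]; exact hYmono
        · rw [hX1, hY1]
          by_cases hxS : x ∈ S
          · have hO : (S ∪ (X i ∪ {x})) ∩ Y i = (S ∪ X i) ∩ Y i := by
              ext v
              by_cases hv : v = x <;>
                simp only [Finset.mem_inter, Finset.mem_union, Finset.mem_singleton, hv] <;>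
                tauto
            rw [hO]
            linarith
          · have hO : (S ∪ (X i ∪ {x})) ∩ Y i = ((S ∪ X i) ∩ Y i) ∪ {x} := by
              ext v
              by_cases hv : v = x <;>
                simp only [Finset.mem_inter, Finset.mem_union, Finset.mem_singleton, hv] <;>
                tauto
            rw [hO]
            set O := (S ∪ X i) ∩ Y i with hOdef
            have hOY : O ⊆ Y i := Finset.inter_subset_right
            have hxO : x ∉ O := by
              rw [hOdef]
              simp only [Finset.mem_inter, Finset.mem_union]
              tauto
            have hgkey := dg_submod_key g hg_sub hOY hxO hxY
            have e1 : f (O ∪ {x}) = g (O ∪ {x}) + ℓ O + a x := by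
              rw [hf, hl_insert _ _ hxO]; ring
            have e2 : f (Y i \ {x}) = g (Y i \ {x}) + ℓ (Y i) - a x := by
              rw [hf, hl_erase _ _ hxY]; ring
            have hstep2 : f O - f (O ∪ {x}) ≤ f (Y i \ {x}) - f (Y i) := by
              rw [e1, e2, hf O, hf (Y i)]; linarith
            linarith
      · obtain ⟨hX1, hY1⟩ := (hstep ⟨i, hi⟩).2 hc
        push_neg at hc
        have hrempos : 0 ≤ f (Y i \ {x}) - f (Y i) := by linarith
        refine ⟨?_, ?_, ?_, ?_⟩
        · rw [hX1, hY1]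
          intro v hv
          exact Finset.mem_sdiff.2 ⟨hXYi hv, fun hh => hxX (by rwa [Finset.mem_singleton.1 hh] at hv)⟩
        · intro v
          rw [hX1, hY1]
          constructor
          · rintro ⟨hvY, hvX⟩
            obtain ⟨hvY', hvx⟩ := Finset.mem_sdiff.1 hvY
            obtain ⟨j, hj, hjv⟩ := (hiff v).1 ⟨hvY', hvX⟩
            refine ⟨j, ?_, hjv⟩
            rcases Nat.lt_or_ge (j : ℕ) (i + 1) with h | h
            · exfalso
              have : j = ⟨i, hi⟩ := Fin.ext (show (j:ℕ) = i by omega)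
              exact (Finset.mem_singleton.2 (by rw [← hjv, this])) |> hvx
            · exact h
          · rintro ⟨j, hj, hjv⟩
            have hprev := (hiff v).2 ⟨j, by omega, hjv⟩
            have hvx : v ≠ x := by
              intro hh
              have : j = ⟨i, hi⟩ := hu.1 (by rw [hjv, hh])
              have : (j : ℕ) = i := by rw [this]
              omega
            exact ⟨Finset.mem_sdiff.2 ⟨hprev.1, fun hh => hvx (Finset.mem_singleton.1 hh)⟩,
              hprev.2⟩
        · rw [hY1]; linarith
        · rw [hX1, hY1]
          by_cases hxS : x ∈ S
          · have hO : (S ∪ X i) ∩ (Y i \ {x}) = ((S ∪ X i) ∩ Y i) \ {x} := by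
              ext v
              by_cases hv : v = x <;>
                simp only [Finset.mem_inter, Finset.mem_union, Finset.mem_singleton,
                  Finset.mem_sdiff, hv] <;> tauto
            rw [hO]
            set O := (S ∪ X i) ∩ Y i with hOdef
            have hXO : X i ⊆ O := by
              intro v hv
              exact Finset.mem_inter.2 ⟨Finset.mem_union_right _ hv, hXYi hv⟩
            have hxO : x ∈ O := Finset.mem_inter.2 ⟨Finset.mem_union_left _ hxS, hxY⟩
            have hgkey := dg_submod_key g hg_sub hXO hxX hxO
            have e1 : f (X i ∪ {x}) = g (X i ∪ {x}) + ℓ (X i) + a x := by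
              rw [hf, hl_insert _ _ hxX]; ring
            have e2 : f (O \ {x}) = g (O \ {x}) + ℓ O - a x := by
              rw [hf, hl_erase _ _ hxO]; ring
            have hstep2 : f O - f (O \ {x}) ≤ f (X i ∪ {x}) - f (X i) := by
              rw [e1, e2, hf O, hf (X i)]; linarith
            linarith
          · have hO : (S ∪ X i) ∩ (Y i \ {x}) = (S ∪ X i) ∩ Y i := by
              ext v
              by_cases hv : v = x <;>
                simp only [Finset.mem_inter, Finset.mem_union, Finset.mem_singleton,
                  Finset.mem_sdiff, hv] <;> tauto
            rw [hO]
            linarith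
  -- now conclude
  obtain ⟨hXYn, hiffn, hYmono, htel⟩ := key n (le_refl n)
  have hXn_eq : Y n = X n := by
    apply Finset.Subset.antisymm _ hXYn
    intro v hv
    by_contra hvX
    obtain ⟨j, hj, _⟩ := (hiffn v).1 ⟨hv, hvX⟩
    exact absurd j.isLt (by omega)
  have hOn : (S ∪ X n) ∩ Y n = X n := by
    rw [hXn_eq]
    exact Finset.inter_eq_right.2 Finset.subset_union_right
  have hO0 : (S ∪ X 0) ∩ Y 0 = S := by
    rw [hX0, hY0]; simp
  have hlS_le : ℓ S ≤ ℓ Finset.univ := by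
    rw [hℓ, hℓ]
    exact Finset.sum_le_sum_of_subset_of_nonneg (Finset.subset_univ S)
      (fun v _ _ => ha v)
  have hl_empty : ℓ (∅ : Finset α) = 0 := by rw [hℓ]; simp
  have hf_empty : 0 ≤ f (X 0) := by
    rw [hX0, hf, hl_empty]
    simpa using hg_nonneg ∅
  have hfuniv : ℓ S ≤ f (Y 0) := by
    rw [hY0, hf]
    have := hg_nonneg (Finset.univ : Finset α)
    linarith
  rw [hOn, hO0, hXn_eq] at htel
  -- htel : f S - f (X n) ≤ (f (X n) - f (X 0)) + (f (X n) - f (Y 0))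
  rw [hXn_eq] at hYmono
  -- hYmono : f (Y 0) ≤ f (X n)
  have h1 : g S + 2 * ℓ S ≤ 3 * f (X n) := by
    have hfS : f S = g S + ℓ S := hf S
    linarith
  have h2 : ℓ S ≤ f (X n) := le_trans hfuniv hYmono
  nlinarith [mul_nonneg hr0 (by linarith : (0:ℝ) ≤ 3 * f (X n) - g S - 2 * ℓ S),
    mul_nonneg (by linarith : (0:ℝ) ≤ 1 - 3 * r) (by linarith : (0:ℝ) ≤ f (X n) - ℓ S)]
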